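/- For every real number x ≥ 22, the half-open interval (x/3, x/2] contains at least one prime number. -/

import Mathlib

set_option maxHeartbeats 1000000

open Finset ArithmeticFunction

namespace Nagura15

noncomputable def Lf (N : ℕ) : ℝ := ∑ n ∈ Finset.Ioc 0 N, Real.log n

noncomputable def psi (N : ℕ) : ℝ := ∑ d ∈ Finset.Ioc 0 N, Λ d

noncomputable def th (N : ℕ) : ℝ := ∑ p ∈ (Finset.Ioc 0 N).filter Nat.Prime, Real.log p

noncomputable def Ef (N : ℕ) : ℝ := Lf N - Lf (N/2) - Lf (N/3) - Lf (N/5) + Lf (N/30)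

noncomputable def Ac : ℝ := Real.log 2 / 2 + Real.log 3 / 3 + Real.log 5 / 5 - Real.log 30 / 30

/-- the sawtooth h -/
lemma h_bounds (q : ℕ) : q/2 + q/3 + q/5 ≤ q + q/30 ∧ q + q/30 ≤ q/2 + q/3 + q/5 + 1 := by
  omega

lemma h_one {q : ℕ} (h1 : 1 ≤ q) (h5 : q ≤ 5) : q + q/30 = q/2 + q/3 + q/5 + 1 := by
  interval_cases q <;> rfl

/-- Stirling bounds -/
lemma stirling (N : ℕ) (hN : 1 ≤ N) :
    (N:ℝ) * Real.log N - N + 1 ≤ Lf N ∧ Lf N ≤ (N:ℝ) * Real.log N - N + 1 + Real.log N := by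
  induction N with
  | zero => omega
  | succ n ih =>
    rcases Nat.eq_or_lt_of_le hN with h1 | h1
    · simp [Lf, ← h1]
    · have hn : 1 ≤ n := by omega
      obtain ⟨ihl, ihu⟩ := ih hn
      have hnR : (1:ℝ) ≤ (n:ℝ) := by exact_mod_cast hn
      have hpos : (0:ℝ) < n := by linarith
      have hstep : Lf (n+1) = Lf n + Real.log (n+1) := by
        have : Finset.Ioc 0 (n+1) = insert (n+1) (Finset.Ioc 0 n) := by
          ext a; simp [Finset.mem_Ioc, Finset.mem_insert]; omega
        simp [Lf, this, Finset.sum_insert, Finset.mem_Ioc]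
        ring
      -- key log inequalities
      have hlog1 : (1:ℝ) ≤ ((n:ℝ)+1) * (Real.log (n+1) - Real.log n) := by
        have h := Real.one_sub_inv_le_log_of_pos (x := ((n:ℝ)+1)/n) (by positivity)
        rw [Real.log_div (by linarith) (by linarith)] at h
        have hinv : (((n:ℝ)+1)/n)⁻¹ = n/(n+1) := by field_simp
        rw [hinv] at h
        have : 1 - (n:ℝ)/(n+1) = 1/(n+1) := by field_simp; ring
        rw [this] at h
        calc (1:ℝ) = ((n:ℝ)+1) * (1/(n+1)) := by field_simp
        _ ≤ ((n:ℝ)+1) * (Real.log (n+1) - Real.log n) := by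
            apply mul_le_mul_of_nonneg_left h (by linarith)
      have hlog2 : (n:ℝ) * (Real.log (n+1) - Real.log n) ≤ 1 := by
        have h := Real.log_le_sub_one_of_pos (x := ((n:ℝ)+1)/n) (by positivity)
        rw [Real.log_div (by linarith) (by linarith)] at h
        have : ((n:ℝ)+1)/n - 1 = 1/n := by field_simp; ring
        rw [this] at h
        calc (n:ℝ) * (Real.log (n+1) - Real.log n) ≤ (n:ℝ) * (1/n) := by
              apply mul_le_mul_of_nonneg_left h (by linarith)
        _ = 1 := by field_simp
      constructor
      · push_cast
        rw [hstep]
        nlinarith [hlog1]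
      · push_cast
        rw [hstep]
        nlinarith [hlog2]

noncomputable def ff (t : ℝ) : ℝ := t * Real.log t - t

lemma ff_mono {a b : ℝ} (ha : 1 ≤ a) (hab : a ≤ b) : ff a ≤ ff b := by
  unfold ff
  have hb : 1 ≤ b := le_trans ha hab
  have h1 : Real.log (b/a) ≥ 1 - a/b := by
    have := Real.one_sub_inv_le_log_of_pos (x := b/a) (by positivity)
    have hinv : ((b:ℝ)/a)⁻¹ = a/b := by field_simp
    linarith [this, hinv ▸ this]
  have h2 : Real.log b - Real.log a = Real.log (b/a) := (Real.log_div (by linarith) (by linarith)).symm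
  have hla : 0 ≤ Real.log a := Real.log_nonneg ha
  nlinarith [mul_le_mul_of_nonneg_left h1 (le_trans zero_le_one hb),
    Real.log_nonneg hb, mul_div_cancel₀ a (show (b:ℝ) ≠ 0 by linarith)]

lemma ff_diff {a b : ℝ} (ha : 1 ≤ a) (hab : a ≤ b) : ff b - ff a ≤ (b - a) * Real.log b := by
  unfold ff
  have hb : 1 ≤ b := le_trans ha hab
  have h1 : Real.log (b/a) ≤ b/a - 1 := Real.log_le_sub_one_of_pos (by positivity)
  have h2 : Real.log b - Real.log a = Real.log (b/a) := (Real.log_div (by linarith) (by linarith)).symm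
  nlinarith [mul_le_mul_of_nonneg_left h1 (show (0:ℝ) ≤ a by linarith),
    mul_div_cancel₀ b (show (a:ℝ) ≠ 0 by linarith)]


lemma divisors_eq_filter {n N : ℕ} (hn : 0 < n) (hnN : n ≤ N) :
    n.divisors = (Finset.Ioc 0 N).filter (· ∣ n) := by
  ext a
  simp only [Nat.mem_divisors, Finset.mem_filter, Finset.mem_Ioc]
  constructor
  · rintro ⟨hd, -⟩
    exact ⟨⟨Nat.pos_of_dvd_of_pos hd hn, le_trans (Nat.le_of_dvd hn hd) hnN⟩, hd⟩
  · rintro ⟨-, hd⟩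
    exact ⟨hd, by omega⟩

lemma Lf_eq (N : ℕ) : Lf N = ∑ d ∈ Finset.Ioc 0 N, Λ d * ((N / d : ℕ) : ℝ) := by
  unfold Lf
  have h1 : ∀ n ∈ Finset.Ioc 0 N, Real.log n = ∑ d ∈ Finset.Ioc 0 N, if d ∣ n then Λ d else 0 := by
    intro n hn
    rw [Finset.mem_Ioc] at hn
    rw [← Finset.sum_filter, ← divisors_eq_filter hn.1 hn.2, vonMangoldt_sum]
  rw [Finset.sum_congr rfl h1, Finset.sum_comm]
  apply Finset.sum_congr rfl
  intro d _
  rw [← Finset.sum_filter, Finset.sum_const, ← Nat.Ioc_filter_dvd_card_eq_div]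
  simp [mul_comm]


noncomputable def hR (q : ℕ) : ℝ := (q:ℝ) - ((q/2 : ℕ) : ℝ) - ((q/3 : ℕ) : ℝ) - ((q/5 : ℕ) : ℝ) + ((q/30 : ℕ) : ℝ)

lemma hR_nonneg (q : ℕ) : 0 ≤ hR q := by
  have h := (h_bounds q).1
  have : ((q/2 + q/3 + q/5 : ℕ) : ℝ) ≤ ((q + q/30 : ℕ) : ℝ) := by exact_mod_cast h
  push_cast at this
  unfold hR; linarith

lemma hR_le_one (q : ℕ) : hR q ≤ 1 := by
  have h := (h_bounds q).2
  have : ((q + q/30 : ℕ) : ℝ) ≤ ((q/2 + q/3 + q/5 + 1 : ℕ) : ℝ) := by exact_mod_cast h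
  push_cast at this
  unfold hR; linarith

lemma hR_one {q : ℕ} (h1 : 1 ≤ q) (h5 : q ≤ 5) : hR q = 1 := by
  have h : q + q/30 = q/2 + q/3 + q/5 + 1 := by omega
  have : ((q + q/30 : ℕ) : ℝ) = ((q/2 + q/3 + q/5 + 1 : ℕ) : ℝ) := by exact_mod_cast h
  push_cast at this
  unfold hR; linarith

lemma Lf_div_eq (N k : ℕ) (hk : 0 < k) :
    Lf (N/k) = ∑ d ∈ Finset.Ioc 0 N, Λ d * ((N / d / k : ℕ) : ℝ) := by
  rw [Lf_eq]
  have hfun : ∀ d, N / k / d = N / d / k := fun d => by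
    rw [Nat.div_div_eq_div_mul, Nat.div_div_eq_div_mul, Nat.mul_comm]
  rw [Finset.sum_congr rfl (fun d _ => by rw [hfun d])]
  apply Finset.sum_subset
  · intro a ha; rw [Finset.mem_Ioc] at *
    exact ⟨ha.1, le_trans ha.2 (Nat.div_le_self N k)⟩
  · intro d hd hnd
    rw [Finset.mem_Ioc] at hd hnd
    have hdk : N / k < d := by omega
    have hd0 : 0 < d := hd.1
    have hNdk : N < d * k := (Nat.div_lt_iff_lt_mul hk).mp hdk
    have : N / d / k = 0 := by
      apply Nat.div_eq_of_lt
      exact (Nat.div_lt_iff_lt_mul hd0).mpr (by rw [Nat.mul_comm] at hNdk; exact hNdk)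
    simp [this]

lemma Ef_eq (N : ℕ) : Ef N = ∑ d ∈ Finset.Ioc 0 N, Λ d * hR (N/d) := by
  unfold Ef
  rw [Lf_eq, Lf_div_eq N 2 (by norm_num), Lf_div_eq N 3 (by norm_num),
    Lf_div_eq N 5 (by norm_num), Lf_div_eq N 30 (by norm_num),
    ← Finset.sum_sub_distrib, ← Finset.sum_sub_distrib, ← Finset.sum_sub_distrib,
    ← Finset.sum_add_distrib]
  apply Finset.sum_congr rfl
  intro d _
  unfold hR; ring

lemma Ef_le_psi (N : ℕ) : Ef N ≤ psi N := by
  rw [Ef_eq]; unfold psi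
  apply Finset.sum_le_sum
  intro d _
  calc Λ d * hR (N/d) ≤ Λ d * 1 :=
        mul_le_mul_of_nonneg_left (hR_le_one _) vonMangoldt_nonneg
  _ = Λ d := mul_one _

lemma psi_le_Ef_add (N : ℕ) : psi N ≤ Ef N + psi (N/6) := by
  have hsplit : psi (N/6) + ∑ d ∈ Finset.Ioc (N/6) N, Λ d = psi N := by
    unfold psi
    exact Finset.sum_Ioc_consecutive _ (Nat.zero_le _) (Nat.div_le_self N 6)
  have hE : ∑ d ∈ Finset.Ioc (N/6) N, Λ d ≤ Ef N := by
    rw [Ef_eq]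
    have hsub : Finset.Ioc (N/6) N ⊆ Finset.Ioc 0 N := by
      intro a ha; rw [Finset.mem_Ioc] at *; omega
    calc ∑ d ∈ Finset.Ioc (N/6) N, Λ d = ∑ d ∈ Finset.Ioc (N/6) N, Λ d * hR (N/d) := by
          apply Finset.sum_congr rfl
          intro d hd
          rw [Finset.mem_Ioc] at hd
          have hd0 : 0 < d := by omega
          have h1 : 1 ≤ N / d := Nat.one_le_div_iff hd0 |>.mpr hd.2
          have h5 : N / d ≤ 5 := by
            have h6 : N < 6 * d := by omega
            have := (Nat.div_lt_iff_lt_mul hd0).mpr h6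
            omega
          rw [hR_one h1 h5, mul_one]
    _ ≤ ∑ d ∈ Finset.Ioc 0 N, Λ d * hR (N/d) := by
          apply Finset.sum_le_sum_of_subset_of_nonneg hsub
          intro i _ _
          exact mul_nonneg vonMangoldt_nonneg (hR_nonneg _)
  linarith


lemma ff_comb {x : ℝ} (hx : 0 < x) :
    ff x - ff (x/2) - ff (x/3) - ff (x/5) + ff (x/30) = Ac * x := by
  unfold ff Ac
  rw [Real.log_div (by positivity) (by norm_num), Real.log_div (by positivity) (by norm_num),
    Real.log_div (by positivity) (by norm_num), Real.log_div (by positivity) (by norm_num)]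
  ring

lemma natdiv_bounds (N k : ℕ) (hk : 0 < k) :
    (N:ℝ)/k - 1 < ((N/k : ℕ) : ℝ) ∧ ((N/k : ℕ) : ℝ) ≤ (N:ℝ)/k := by
  have hkR : (0:ℝ) < k := by exact_mod_cast hk
  constructor
  · have h1 : N < N/k * k + k := Nat.lt_div_mul_add hk
    have h2 : (N:ℝ) < ((N/k:ℕ):ℝ) * k + k := by exact_mod_cast h1
    rw [div_sub_one (ne_of_gt hkR), div_lt_iff₀ hkR]
    linarith
  · exact Nat.cast_div_le

lemma Ef_bounds {N : ℕ} (hN : 30 ≤ N) :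
    Ac * N - 4 * Real.log N - 1 ≤ Ef N ∧ Ef N ≤ Ac * N + 5 * Real.log N := by
  have hN0 : (0:ℝ) < N := by positivity
  have hNR : (30:ℝ) ≤ (N:ℝ) := by exact_mod_cast hN
  have h2 := natdiv_bounds N 2 (by norm_num)
  have h3 := natdiv_bounds N 3 (by norm_num)
  have h5 := natdiv_bounds N 5 (by norm_num)
  have h30 := natdiv_bounds N 30 (by norm_num)
  have c2 : (1:ℝ) ≤ ((N/2 : ℕ):ℝ) := by
    have : 1 ≤ N/2 := by omega
    exact_mod_cast this
  have c3 : (1:ℝ) ≤ ((N/3 : ℕ):ℝ) := by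
    have : 1 ≤ N/3 := by omega
    exact_mod_cast this
  have c5 : (1:ℝ) ≤ ((N/5 : ℕ):ℝ) := by
    have : 1 ≤ N/5 := by omega
    exact_mod_cast this
  have c30 : (1:ℝ) ≤ ((N/30 : ℕ):ℝ) := by
    have : 1 ≤ N/30 := by omega
    exact_mod_cast this
  have sN := stirling N (by omega)
  have s2 := stirling (N/2) (by omega)
  have s3 := stirling (N/3) (by omega)
  have s5 := stirling (N/5) (by omega)
  have s30 := stirling (N/30) (by omega)
  -- real-division targets
  have r2 : (1:ℝ) ≤ (N:ℝ)/2 := le_trans c2 h2.2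
  have r3 : (1:ℝ) ≤ (N:ℝ)/3 := le_trans c3 h3.2
  have r5 : (1:ℝ) ≤ (N:ℝ)/5 := le_trans c5 h5.2
  have r30 : (1:ℝ) ≤ (N:ℝ)/30 := le_trans c30 h30.2
  -- mono
  have m2 : ff ((N/2:ℕ):ℝ) ≤ ff ((N:ℝ)/2) := ff_mono c2 h2.2
  have m3 : ff ((N/3:ℕ):ℝ) ≤ ff ((N:ℝ)/3) := ff_mono c3 h3.2
  have m5 : ff ((N/5:ℕ):ℝ) ≤ ff ((N:ℝ)/5) := ff_mono c5 h5.2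
  have m30 : ff ((N/30:ℕ):ℝ) ≤ ff ((N:ℝ)/30) := ff_mono c30 h30.2
  -- diffs
  have dd : ∀ (a b : ℝ), 1 ≤ a → a ≤ b → b - 1 ≤ a → ff b - ff a ≤ Real.log b := by
    intro a b ha hab hba
    have h := ff_diff ha hab
    have hl : 0 ≤ Real.log b := Real.log_nonneg (le_trans ha hab)
    nlinarith
  have d2 : ff ((N:ℝ)/2) - ff ((N/2:ℕ):ℝ) ≤ Real.log ((N:ℝ)/2) :=
    dd _ _ c2 h2.2 (by linarith [h2.1])
  have d3 : ff ((N:ℝ)/3) - ff ((N/3:ℕ):ℝ) ≤ Real.log ((N:ℝ)/3) :=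
    dd _ _ c3 h3.2 (by linarith [h3.1])
  have d5 : ff ((N:ℝ)/5) - ff ((N/5:ℕ):ℝ) ≤ Real.log ((N:ℝ)/5) :=
    dd _ _ c5 h5.2 (by linarith [h5.1])
  have d30 : ff ((N:ℝ)/30) - ff ((N/30:ℕ):ℝ) ≤ Real.log ((N:ℝ)/30) :=
    dd _ _ c30 h30.2 (by linarith [h30.1])
  -- log bounds
  have lg2 : Real.log ((N:ℝ)/2) ≤ Real.log N ∧ 0 ≤ Real.log ((N:ℝ)/2) :=
    ⟨Real.log_le_log (by linarith) (by linarith), Real.log_nonneg r2⟩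
  have lg3 : Real.log ((N:ℝ)/3) ≤ Real.log N ∧ 0 ≤ Real.log ((N:ℝ)/3) :=
    ⟨Real.log_le_log (by linarith) (by linarith), Real.log_nonneg r3⟩
  have lg5 : Real.log ((N:ℝ)/5) ≤ Real.log N ∧ 0 ≤ Real.log ((N:ℝ)/5) :=
    ⟨Real.log_le_log (by linarith) (by linarith), Real.log_nonneg r5⟩
  have lg30 : Real.log ((N:ℝ)/30) ≤ Real.log N ∧ 0 ≤ Real.log ((N:ℝ)/30) :=
    ⟨Real.log_le_log (by linarith) (by linarith), Real.log_nonneg r30⟩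
  have lgc2 : Real.log ((N/2:ℕ):ℝ) ≤ Real.log ((N:ℝ)/2) :=
    Real.log_le_log (by linarith) h2.2
  have lgc3 : Real.log ((N/3:ℕ):ℝ) ≤ Real.log ((N:ℝ)/3) :=
    Real.log_le_log (by linarith) h3.2
  have lgc5 : Real.log ((N/5:ℕ):ℝ) ≤ Real.log ((N:ℝ)/5) :=
    Real.log_le_log (by linarith) h5.2
  have lgc30 : Real.log ((N/30:ℕ):ℝ) ≤ Real.log ((N:ℝ)/30) :=
    Real.log_le_log (by linarith) h30.2
  have lgc30n : 0 ≤ Real.log ((N/30:ℕ):ℝ) := Real.log_nonneg c30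
  have hcomb := ff_comb hN0
  unfold ff at m2 m3 m5 m30 d2 d3 d5 d30 hcomb
  constructor
  · have uL2 := s2.2; have uL3 := s3.2; have uL5 := s5.2; have lL30 := s30.1; have lLN := sN.1
    unfold Ef
    linarith only [lLN, uL2, uL3, uL5, lL30, m2, m3, m5, d30, lgc2, lgc3, lgc5,
      lg2.1, lg3.1, lg5.1, lg30.1, lg2.2, lg3.2, lg5.2, lg30.2, hcomb]
  · have lL2 := s2.1; have lL3 := s3.1; have lL5 := s5.1; have uL30 := s30.2; have uLN := sN.2
    unfold Ef
    linarith only [uLN, lL2, lL3, lL5, uL30, d2, d3, d5, m30, lgc30, lgc30n,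
      lg2.1, lg3.1, lg5.1, lg30.1, lg2.2, lg3.2, lg5.2, lg30.2, hcomb]


lemma log32_bounds : 1/3 ≤ Real.log (3/2) ∧ Real.log (3/2) ≤ 1/2 := by
  constructor
  · have h := Real.one_sub_inv_le_log_of_pos (x := (3:ℝ)/2) (by norm_num)
    norm_num at h; linarith
  · have h := Real.log_le_sub_one_of_pos (x := (3:ℝ)/2) (by norm_num)
    linarith

lemma log54_bounds : 1/5 ≤ Real.log (5/4) ∧ Real.log (5/4) ≤ 1/4 := by
  constructor
  · have h := Real.one_sub_inv_le_log_of_pos (x := (5:ℝ)/4) (by norm_num)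
    norm_num at h; linarith
  · have h := Real.log_le_sub_one_of_pos (x := (5:ℝ)/4) (by norm_num)
    linarith

lemma log1615_lb : 1/16 ≤ Real.log (16/15) := by
  have h := Real.one_sub_inv_le_log_of_pos (x := (16:ℝ)/15) (by norm_num)
  norm_num at h; linarith

lemma log3_eq : Real.log 3 = Real.log 2 + Real.log (3/2) := by
  rw [← Real.log_mul (by norm_num) (by norm_num)]; norm_num

lemma log5_eq : Real.log 5 = 2 * Real.log 2 + Real.log (5/4) := by
  rw [show (2:ℝ) * Real.log 2 = Real.log 4 by
      rw [show (4:ℝ) = 2^2 by norm_num, Real.log_pow]; push_cast; ring,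
    ← Real.log_mul (by norm_num) (by norm_num)]
  norm_num

lemma log30_eq : Real.log 30 = 5 * Real.log 2 - Real.log (16/15) := by
  rw [show (5:ℝ) * Real.log 2 = Real.log 32 by
      rw [show (32:ℝ) = 2^5 by norm_num, Real.log_pow]; push_cast; ring,
    ← Real.log_div (by norm_num) (by norm_num)]
  norm_num

lemma log30_eq' : Real.log 30 = Real.log 2 + Real.log 3 + Real.log 5 := by
  rw [← Real.log_mul (by norm_num) (by norm_num), ← Real.log_mul (by norm_num) (by norm_num)]
  norm_num

lemma log3_bounds : 1.0264 ≤ Real.log 3 ∧ Real.log 3 ≤ 1.1932 := by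
  have h := log32_bounds
  have := Real.log_two_gt_d9
  have := Real.log_two_lt_d9
  rw [log3_eq]; constructor <;> linarith

lemma log5_bounds : 1.586 ≤ Real.log 5 ∧ Real.log 5 ≤ 1.637 := by
  have h := log54_bounds
  have := Real.log_two_gt_d9
  have := Real.log_two_lt_d9
  rw [log5_eq]; constructor <;> linarith

lemma Ac_bounds : 0.8925 ≤ Ac ∧ Ac ≤ 0.962 := by
  unfold Ac
  have h32 := log32_bounds
  have h54 := log54_bounds
  have h1615 := log1615_lb
  have hl2 := Real.log_two_gt_d9
  have hl2' := Real.log_two_lt_d9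
  have e3 := log3_eq
  have e5 := log5_eq
  have e30 := log30_eq
  have e30' := log30_eq'
  have h1615' : Real.log (16/15) ≤ Real.log 2 + Real.log 3 + Real.log 5 - 5 * Real.log 2 + 5 * Real.log 2 := by
    linarith [Real.log_le_sub_one_of_pos (x := (16:ℝ)/15) (by norm_num)]
  constructor
  · linarith
  · nlinarith [Real.log_le_sub_one_of_pos (x := (16:ℝ)/15) (by norm_num)]

lemma log4_lt : 2 * Real.log 2 ≤ 1.3863 := by
  have := Real.log_two_lt_d9; linarith


lemma psi_nonneg (N : ℕ) : 0 ≤ psi N :=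
  Finset.sum_nonneg fun _ _ => vonMangoldt_nonneg

lemma psi_lower {N : ℕ} (hN : 30 ≤ N) : 0.8925 * N - 4 * Real.log N - 1 ≤ psi N := by
  have h := (Ef_bounds hN).1
  have h2 := Ef_le_psi N
  have hA := Ac_bounds.1
  have hN0 : (0:ℝ) ≤ N := Nat.cast_nonneg N
  nlinarith

lemma psi_upper : ∀ N : ℕ, psi N ≤ 1.1544 * N + 3 * (Real.log (N+1))^2 + 101 := by
  intro N
  induction N using Nat.strong_induction_on with
  | _ N ih =>
    rcases lt_or_ge N 30 with hN | hN
    · -- small case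
      have h1 : psi N ≤ ∑ d ∈ Finset.Ioc 0 N, Real.log 32 := by
        apply Finset.sum_le_sum
        intro d hd
        rw [Finset.mem_Ioc] at hd
        calc Λ d ≤ Real.log d := vonMangoldt_le_log
        _ ≤ Real.log 32 := Real.log_le_log (by exact_mod_cast hd.1) (by
              have : d ≤ 32 := by omega
              exact_mod_cast this)
      rw [Finset.sum_const, Nat.card_Ioc, nsmul_eq_mul] at h1
      have h32 : Real.log 32 = 5 * Real.log 2 := by
        rw [show (32:ℝ) = 2^5 by norm_num, Real.log_pow]; push_cast; ring
      have hcard : ((N - 0 : ℕ):ℝ) ≤ 29 := by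
        have : (N - 0 : ℕ) ≤ 29 := by omega
        exact_mod_cast this
      have hl2 : 0 < Real.log 2 := Real.log_pos (by norm_num)
      have hl2' := Real.log_two_lt_d9
      have hsq : 0 ≤ (Real.log (N+1))^2 := sq_nonneg _
      have hN0 : (0:ℝ) ≤ N := Nat.cast_nonneg N
      nlinarith [h1, hcard, h32]
    · -- inductive case
      have hrec := psi_le_Ef_add N
      have hEf := (Ef_bounds hN).2
      have hIH := ih (N/6) (by omega)
      have hA := Ac_bounds.2
      have hN0 : (30:ℝ) ≤ N := by exact_mod_cast hN
      -- cast facts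
      have hc1 : ((N/6 : ℕ):ℝ) ≤ (N:ℝ)/6 := Nat.cast_div_le
      have hc2 : ((N/6 : ℕ):ℝ) + 1 ≤ ((N:ℝ)+1)/5 := by
        have h6 : (6:ℕ) ∣ 6 := dvd_refl 6
        have : (N/6 : ℕ) + 1 ≤ (N+1)/5 → (((N/6 : ℕ) + 1 : ℕ):ℝ) ≤ (((N+1)/5 : ℕ):ℝ) := by
          intro h; exact_mod_cast h
        calc ((N/6 : ℕ):ℝ) + 1 ≤ (N:ℝ)/6 + 1 := by linarith
        _ ≤ ((N:ℝ)+1)/5 := by linarith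
      -- log bounds
      have hlogN : Real.log N ≤ Real.log (N+1) :=
        Real.log_le_log (by linarith) (by linarith)
      have hlog6 : Real.log (((N/6:ℕ):ℝ)+1) ≤ Real.log (N+1) - Real.log 5 := by
        rw [← Real.log_div (by linarith) (by norm_num)]
        apply Real.log_le_log (by positivity) hc2
      have hlog6nn : 0 ≤ Real.log (((N/6:ℕ):ℝ)+1) := Real.log_nonneg (by
        have : (0:ℝ) ≤ ((N/6:ℕ):ℝ) := Nat.cast_nonneg _
        linarith)
      have hlogN1 : 2.772 ≤ Real.log (N+1) := by
        have h16 : Real.log 16 ≤ Real.log (N+1) :=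
          Real.log_le_log (by norm_num) (by linarith)
        have : Real.log 16 = 4 * Real.log 2 := by
          rw [show (16:ℝ) = 2^4 by norm_num, Real.log_pow]; push_cast; ring
        have := Real.log_two_gt_d9
        linarith
      have hl5 := log5_bounds
      -- key quadratic inequality
      have hkey : 5 * Real.log (N+1) + 3 * (Real.log (N+1) - Real.log 5)^2
          ≤ 3 * (Real.log (N+1))^2 := by
        nlinarith [hlogN1, hl5.1, hl5.2]
      have hsq : (Real.log (((N/6:ℕ):ℝ)+1))^2 ≤ (Real.log (N+1) - Real.log 5)^2 := by
        apply sq_le_sq'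
        · nlinarith [hl5.2]
        · exact hlog6
      push_cast at hIH ⊢
      nlinarith [hrec, hEf, hIH, hc1, hlogN, hkey, hsq, hN0]

lemma th_le (N : ℕ) : th N ≤ 1.3863 * N := by
  have hset : (Finset.Ioc 0 N).filter Nat.Prime = (Finset.range (N+1)).filter Nat.Prime := by
    ext p
    simp only [Finset.mem_filter, Finset.mem_Ioc, Finset.mem_range]
    constructor
    · rintro ⟨⟨h1, h2⟩, hp⟩; exact ⟨by omega, hp⟩
    · rintro ⟨h1, hp⟩; exact ⟨⟨hp.pos, by omega⟩, hp⟩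
  have hprod : th N = Real.log (primorial N) := by
    unfold th
    rw [hset, primorial]
    rw [Nat.cast_prod, Real.log_prod]
    intro p hp
    simp only [Finset.mem_filter] at hp
    exact_mod_cast hp.2.pos.ne'
  rw [hprod]
  calc Real.log (primorial N) ≤ Real.log (4^N) := by
        apply Real.log_le_log (by exact_mod_cast primorial_pos N)
        exact_mod_cast primorial_le_4_pow N
  _ = N * (2 * Real.log 2) := by
        rw [Real.log_pow, show (4:ℝ) = 2^2 by norm_num, Real.log_pow]; push_cast; ring
  _ ≤ 1.3863 * N := by
        have := log4_lt
        have hN0 : (0:ℝ) ≤ N := Nat.cast_nonneg N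
        nlinarith


/-- If there is no prime in `(m, M]` with `M ≤ 2m`, then the psi increment is
    bounded by `th (sqrt M)`. -/
lemma window (m M : ℕ) (hmM : m ≤ M) (hM2 : M ≤ 2*m) (hm : 1 ≤ m)
    (hnp : ∀ p : ℕ, p.Prime → ¬(m < p ∧ p ≤ M)) :
    psi M - psi m ≤ th (Nat.sqrt M) := by
  have hsplit : psi m + ∑ d ∈ Finset.Ioc m M, Λ d = psi M := by
    unfold psi; exact Finset.sum_Ioc_consecutive _ (Nat.zero_le _) hmM
  set S := (Finset.Ioc m M).filter IsPrimePow with hS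
  have h1 : ∑ d ∈ Finset.Ioc m M, Λ d = ∑ d ∈ S, Λ d := by
    rw [hS]
    exact (Finset.sum_filter_of_ne (fun d _ hd => vonMangoldt_ne_zero_iff.mp hd)).symm
  -- facts about elements of S
  have hfacts : ∀ d ∈ S, IsPrimePow d ∧ ¬ d.Prime ∧ d.minFac.Prime ∧ d.minFac ≤ Nat.sqrt M
      ∧ m < d ∧ d ≤ M := by
    intro d hd
    rw [hS, Finset.mem_filter, Finset.mem_Ioc] at hd
    obtain ⟨⟨hdm, hdM⟩, hpp⟩ := hd
    have hd2 : 2 ≤ d := hpp.two_le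
    have hnpr : ¬ d.Prime := fun hpr => hnp d hpr ⟨hdm, hdM⟩
    have hmf : d.minFac.Prime := Nat.minFac_prime (by omega)
    have hsq : d.minFac ^ 2 ≤ d := Nat.minFac_sq_le_self (by omega) hnpr
    have : d.minFac ≤ Nat.sqrt M := by
      rw [Nat.le_sqrt]
      calc d.minFac * d.minFac = d.minFac ^ 2 := (sq d.minFac).symm
      _ ≤ d := hsq
      _ ≤ M := hdM
    exact ⟨hpp, hnpr, hmf, this, hdm, hdM⟩
  -- rewrite Λ on S
  have h2 : ∑ d ∈ S, Λ d = ∑ d ∈ S, Real.log d.minFac := by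
    apply Finset.sum_congr rfl
    intro d hd
    rw [vonMangoldt_apply, if_pos (hfacts d hd).1]
  -- injectivity of minFac on S
  have hinj : ∀ d₁ ∈ S, ∀ d₂ ∈ S, d₁.minFac = d₂.minFac → d₁ = d₂ := by
    intro d₁ hd₁ d₂ hd₂ hmf
    obtain ⟨hpp₁, -, -, -, hm₁, hM₁⟩ := hfacts d₁ hd₁
    obtain ⟨hpp₂, -, -, -, hm₂, hM₂⟩ := hfacts d₂ hd₂
    obtain ⟨p₁, k₁, hp₁, hk₁, rfl⟩ := (isPrimePow_nat_iff _).mp hpp₁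
    obtain ⟨p₂, k₂, hp₂, hk₂, rfl⟩ := (isPrimePow_nat_iff _).mp hpp₂
    rw [hp₁.pow_minFac hk₁.ne', hp₂.pow_minFac hk₂.ne'] at hmf
    subst hmf
    rcases lt_trichotomy k₁ k₂ with hk | hk | hk
    · exfalso
      have : 2 * p₁ ^ k₁ ≤ p₁ ^ k₂ := by
        calc 2 * p₁ ^ k₁ ≤ p₁ * p₁ ^ k₁ := by
              have := hp₁.two_le; exact Nat.mul_le_mul_right _ this
        _ = p₁ ^ (k₁ + 1) := by ring
        _ ≤ p₁ ^ k₂ := Nat.pow_le_pow_right hp₁.pos (by omega)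
      omega
    · rw [hk]
    · exfalso
      have : 2 * p₁ ^ k₂ ≤ p₁ ^ k₁ := by
        calc 2 * p₁ ^ k₂ ≤ p₁ * p₁ ^ k₂ := by
              have := hp₁.two_le; exact Nat.mul_le_mul_right _ this
        _ = p₁ ^ (k₂ + 1) := by ring
        _ ≤ p₁ ^ k₁ := Nat.pow_le_pow_right hp₁.pos (by omega)
      omega
  have h3 : ∑ d ∈ S, Real.log d.minFac = ∑ p ∈ S.image Nat.minFac, Real.log p := by
    rw [Finset.sum_image hinj]
  have h4 : ∑ p ∈ S.image Nat.minFac, Real.log p ≤ th (Nat.sqrt M) := by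
    unfold th
    apply Finset.sum_le_sum_of_subset_of_nonneg
    · intro p hp
      rw [Finset.mem_image] at hp
      obtain ⟨d, hd, rfl⟩ := hp
      obtain ⟨-, -, hmf, hle, -, -⟩ := hfacts d hd
      rw [Finset.mem_filter, Finset.mem_Ioc]
      exact ⟨⟨hmf.pos, hle⟩, hmf⟩
    · intro p hp _
      rw [Finset.mem_filter, Finset.mem_Ioc] at hp
      exact Real.log_nonneg (by exact_mod_cast hp.2.one_lt.le)
  linarith [hsplit, h1, h2, h3, h4]

lemma log_le_e (z : ℝ) (hz : 0 < z) : Real.log z ≤ 0.368 * z := by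
  have h1 : Real.log z - 1 = Real.log (z / Real.exp 1) := by
    rw [Real.log_div (ne_of_gt hz) (Real.exp_ne_zero 1), Real.log_exp]
  have h2 := Real.log_le_sub_one_of_pos (x := z / Real.exp 1) (by positivity)
  have he : (1:ℝ) ≤ 0.368 * Real.exp 1 := by nlinarith [Real.exp_one_gt_d9]
  have h3 : z / Real.exp 1 ≤ 0.368 * z := by
    rw [div_le_iff₀ (Real.exp_pos 1)]
    nlinarith [mul_le_mul_of_nonneg_left he hz.le]
  linarith

/-- analytic main lemma -/
lemma analytic {m : ℕ} (hm : 8192 ≤ m) : ∃ p : ℕ, p.Prime ∧ m < p ∧ 2*p ≤ 3*m := by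
  by_contra hnp
  push_neg at hnp
  set M := 3*m/2 with hM
  have hnp' : ∀ p : ℕ, p.Prime → ¬(m < p ∧ p ≤ M) := by
    intro p hp ⟨h1, h2⟩
    exact absurd (hnp p hp h1) (by omega)
  have hwin := window m M (by omega) (by omega) (by omega) hnp'
  have hM30 : 30 ≤ M := by omega
  have hlow := psi_lower hM30
  have hup := psi_upper m
  have hth := th_le (Nat.sqrt M)
  -- casts
  have hMr1 : (3*(m:ℝ) - 1)/2 ≤ (M:ℝ) := by
    have h0 : 3*m ≤ 2*M + 1 := by omega
    have h : ((3*m : ℕ):ℝ) ≤ ((2*M + 1 : ℕ):ℝ) := by exact_mod_cast h0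
    push_cast at h
    linarith
  have hMr2 : (M:ℝ) ≤ 3/2 * m := by
    have : 2*M ≤ 3*m := by omega
    have h : ((2*M : ℕ):ℝ) ≤ ((3*m : ℕ):ℝ) := by exact_mod_cast this
    push_cast at h
    linarith
  have hmr : (8192:ℝ) ≤ (m:ℝ) := by exact_mod_cast hm
  -- sqrt setup
  set s := Real.sqrt m with hs
  set u := Real.sqrt s with husq
  have hs0 : 0 ≤ s := Real.sqrt_nonneg _
  have hu0 : 0 ≤ u := Real.sqrt_nonneg _
  have hs2 : s^2 = m := Real.sq_sqrt (by positivity)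
  have hu2 : u^2 = s := Real.sq_sqrt hs0
  have hs905 : 90.5 ≤ s := by nlinarith
  have hu95 : 9.5 ≤ u := by nlinarith
  -- log m ≤ 1.472 u
  have hlogm : Real.log m = 4 * Real.log u := by
    rw [husq, Real.log_sqrt hs0, hs, Real.log_sqrt (by positivity)]
    ring
  have hlogu : Real.log u ≤ 0.368 * u := log_le_e u (by linarith)
  have hlm : Real.log m ≤ 1.472 * u := by rw [hlogm]; linarith
  -- log M ≤ 0.5 + 1.472 u
  have hlM : Real.log M ≤ 0.5 + 1.472 * u := by
    have h1 : Real.log M ≤ Real.log (3/2 * m) := by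
      apply Real.log_le_log (by exact_mod_cast (by omega : 0 < M)) hMr2
    have h2 : Real.log (3/2 * m) = Real.log (3/2) + Real.log m := by
      rw [Real.log_mul (by norm_num) (by positivity)]
    have h3 : Real.log (3/2 : ℝ) ≤ 0.5 := by
      linarith [Real.log_le_sub_one_of_pos (x := (3:ℝ)/2) (by norm_num)]
    linarith
  -- log (m+1) ≤ 0.694 + 1.472 u
  have hlm1 : Real.log ((m:ℝ)+1) ≤ 0.694 + 1.472 * u := by
    have h1 : Real.log ((m:ℝ)+1) ≤ Real.log (2*m) := by
      apply Real.log_le_log (by positivity) (by linarith)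
    have h2 : Real.log (2*(m:ℝ)) = Real.log 2 + Real.log m := by
      rw [Real.log_mul (by norm_num) (by positivity)]
    have h3 := Real.log_two_lt_d9
    linarith
  have hlm1nn : 0 ≤ Real.log ((m:ℝ)+1) := Real.log_nonneg (by linarith)
  -- sqrt M ≤ 1.2248 s
  have hsqM : ((Nat.sqrt M : ℕ):ℝ) ≤ 1.2248 * s := by
    calc ((Nat.sqrt M : ℕ):ℝ) ≤ Real.sqrt M := Real.nat_sqrt_le_real_sqrt
    _ ≤ Real.sqrt (3/2 * m) := Real.sqrt_le_sqrt hMr2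
    _ ≤ 1.2248 * s := by
        rw [show (3/2 : ℝ) * m = (3/2) * m from rfl, Real.sqrt_mul (by norm_num)]
        have : Real.sqrt (3/2) ≤ 1.2248 := by
          rw [show (1.2248:ℝ) = Real.sqrt (1.2248^2) by
                rw [Real.sqrt_sq (by norm_num)],
            ]
          exact Real.sqrt_le_sqrt (by norm_num)
        rw [← hs]
        nlinarith [Real.sqrt_nonneg ((3:ℝ)/2)]
  -- u ≤ 0.11 s
  have hu_s : u ≤ 0.11 * s := by nlinarith
  -- assemble
  have hpsiM : 0.8925 * ((3*(m:ℝ)-1)/2) - 4 * (0.5 + 1.472*u) - 1 ≤ psi M := by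
    have h := psi_lower hM30
    linarith [hlM, hMr1]
  have hpsim : psi m ≤ 1.1544 * m + 3 * (0.694 + 1.472*u)^2 + 101 := by
    have h := psi_upper m
    have hsq : (Real.log ((m:ℝ)+1))^2 ≤ (0.694 + 1.472*u)^2 := by
      apply sq_le_sq' (by nlinarith) hlm1
    push_cast at h
    linarith
  have hthb : th (Nat.sqrt M) ≤ 1.3863 * (1.2248 * s) := by
    have h := th_le (Nat.sqrt M)
    linarith [h, hsqM]
  -- final contradiction
  have hfinal : psi M - psi m > th (Nat.sqrt M) := by
    have e1 : (m:ℝ) = s^2 := hs2.symm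
    have hexp : 3*(0.694 + 1.472*u)^2 = 1.444908 + 6.129408*u + 6.500352*u^2 := by ring
    have hss : 90.5 * s ≤ s^2 := by nlinarith [hs905, hs0]
    linarith [hpsiM, hpsim, hthb, hu_s, hss, hu2, e1, hexp]
  linarith [hwin]

lemma chainStep {n : ℕ} (q p : ℕ) (hp : p.Prime) (cov : 2*p ≤ 3*q)
    (H : n < q → ∃ r : ℕ, r.Prime ∧ n < r ∧ 2*r ≤ 3*n) (hn : n < p) :
    ∃ r : ℕ, r.Prime ∧ n < r ∧ 2*r ≤ 3*n := by
  by_cases h : 2*p ≤ 3*n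
  · exact ⟨p, hp, hn, h⟩
  · exact H (by omega)

lemma nat_main {n : ℕ} (hn : 8 ≤ n) : ∃ p : ℕ, p.Prime ∧ n < p ∧ 2*p ≤ 3*n := by
  rcases le_or_gt 8192 n with h | h
  · exact analytic h
  · have h1 : n < 10667 := by omega
    revert h1
    refine chainStep 7121 10667 (by norm_num) (by norm_num) ?_
    refine chainStep 4751 7121 (by norm_num) (by norm_num) ?_
    refine chainStep 3169 4751 (by norm_num) (by norm_num) ?_
    refine chainStep 2113 3169 (by norm_num) (by norm_num) ?_
    refine chainStep 1409 2113 (by norm_num) (by norm_num) ?_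
    refine chainStep 941 1409 (by norm_num) (by norm_num) ?_
    refine chainStep 631 941 (by norm_num) (by norm_num) ?_
    refine chainStep 421 631 (by norm_num) (by norm_num) ?_
    refine chainStep 283 421 (by norm_num) (by norm_num) ?_
    refine chainStep 193 283 (by norm_num) (by norm_num) ?_
    refine chainStep 131 193 (by norm_num) (by norm_num) ?_
    refine chainStep 89 131 (by norm_num) (by norm_num) ?_
    refine chainStep 61 89 (by norm_num) (by norm_num) ?_
    refine chainStep 43 61 (by norm_num) (by norm_num) ?_
    refine chainStep 31 43 (by norm_num) (by norm_num) ?_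
    refine chainStep 23 31 (by norm_num) (by norm_num) ?_
    refine chainStep 19 23 (by norm_num) (by norm_num) ?_
    refine chainStep 13 19 (by norm_num) (by norm_num) ?_
    refine chainStep 11 13 (by norm_num) (by norm_num) ?_
    exact fun _ => ⟨11, by norm_num, by omega, by omega⟩


end Nagura15

/-- For every real `x ≥ 22`, the interval `(x/3, x/2]` contains a prime. -/
theorem exists_prime_between_third_and_half (x : ℝ) (hx : 22 ≤ x) :
    ∃ p : ℕ, p.Prime ∧ x / 3 < (p : ℝ) ∧ (p : ℝ) ≤ x / 2 := by
  rcases lt_or_ge x 24 with h24 | h24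
  · exact ⟨11, by norm_num, by linarith, by linarith⟩
  · have hx3 : (8:ℝ) ≤ x/3 := by linarith
    have hn8 : 8 ≤ ⌊x/3⌋₊ := Nat.le_floor (by exact_mod_cast hx3)
    obtain ⟨p, hp, h1, h2⟩ := Nagura15.nat_main hn8
    have hfl : ((⌊x/3⌋₊ : ℕ):ℝ) ≤ x/3 := Nat.floor_le (by linarith)
    have hub : x/3 < (⌊x/3⌋₊ : ℕ) + 1 := Nat.lt_floor_add_one _
    have hc1 : ((⌊x/3⌋₊ : ℕ):ℝ) + 1 ≤ (p:ℝ) := by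
      have : ⌊x/3⌋₊ + 1 ≤ p := h1
      exact_mod_cast this
    have hc2 : 2*(p:ℝ) ≤ 3*((⌊x/3⌋₊ : ℕ):ℝ) := by exact_mod_cast h2
    exact ⟨p, hp, by linarith, by linarith⟩
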